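/- Let γ be a partition of n (γ_1 ≥ … ≥ γ_ℓ) and π ∈ Π_γ. If v, v' ∈ V_γ* (the Specht submodule of ℝ^{Π_γ}) are orthogonal, then the left S_n-submodules span{ρ_L(σ)(B_π v) : σ ∈ S_n} and span{ρ_L(σ)(B_π v') : σ ∈ S_n} of ℝ^{S_n} are orthogonal subspaces. -/

import Mathlib

open Finset

/-- Ordered set partitions of `Fin n` of shape `γ : Fin ℓ → ℕ`: functions
`μ : Fin n → Fin ℓ` whose `j`-th block `μ⁻¹(j)` has exactly `γ j` elements. -/
def OSP (n ℓ : ℕ) (γ : Fin ℓ → ℕ) : Type :=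
  {μ : Fin n → Fin ℓ // ∀ j : Fin ℓ, (Finset.univ.filter fun x => μ x = j).card = γ j}

instance {n ℓ : ℕ} {γ : Fin ℓ → ℕ} : Fintype (OSP n ℓ γ) := by
  unfold OSP; infer_instance

instance {n ℓ : ℕ} {γ : Fin ℓ → ℕ} : DecidableEq (OSP n ℓ γ) := by
  unfold OSP; infer_instance

/-- The left action of `S_n` on ordered set partitions: `(σ · μ)(x) = μ (σ⁻¹ x)`. -/
def ospAct {n ℓ : ℕ} {γ : Fin ℓ → ℕ} (σ : Equiv.Perm (Fin n)) (μ : OSP n ℓ γ) : OSP n ℓ γ :=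
  ⟨fun x => μ.1 (σ.symm x), fun j => by
    rw [← μ.2 j, ← Fintype.card_subtype, ← Fintype.card_subtype]
    exact Fintype.card_congr (σ.symm.subtypeEquiv fun a => Iff.rfl)⟩

/-- The characteristic ("lifting") map `B_π : ℝ^{Π_γ} → ℝ^{S_n}` given by
`(B_π x)(σ) = x (σ⁻¹ · π)`. -/
def liftB {n ℓ : ℕ} {γ : Fin ℓ → ℕ} (π : OSP n ℓ γ) (x : OSP n ℓ γ → ℝ) :
    Equiv.Perm (Fin n) → ℝ :=
  fun σ => x (ospAct σ⁻¹ π)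

/-- The (0-indexed) column of `x` in the ordered set partition `μ`: `x` lies in column `c`
iff `x` is the `(c+1)`-st smallest element of its block, i.e. exactly `c` elements of the
block of `x` are smaller than `x`. -/
def colOf {n ℓ : ℕ} {γ : Fin ℓ → ℕ} (μ : OSP n ℓ γ) (x : Fin n) : ℕ :=
  (Finset.univ.filter fun y => μ.1 y = μ.1 x ∧ y < x).card

/-- The column group `C_μ`: permutations preserving each column of `μ` setwise. -/
def colGroup {n ℓ : ℕ} {γ : Fin ℓ → ℕ} (μ : OSP n ℓ γ) : Finset (Equiv.Perm (Fin n)) :=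
  Finset.univ.filter fun β => ∀ x : Fin n, colOf μ (β x) = colOf μ x

/-- The polytabloid `q_μ = ∑_{β ∈ C_μ} sign(β)·e_{β⁻¹·μ} ∈ ℝ^{Π_γ}`. -/
def polytabloid {n ℓ : ℕ} {γ : Fin ℓ → ℕ} (μ : OSP n ℓ γ) : OSP n ℓ γ → ℝ :=
  fun ρ => ∑ β ∈ colGroup μ,
    if ospAct β⁻¹ μ = ρ then ((Equiv.Perm.sign β : ℤ) : ℝ) else 0

/-- The Specht submodule `V_γ* ⊆ ℝ^{Π_γ}`: the span of the polytabloids. -/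
def Specht (n ℓ : ℕ) (γ : Fin ℓ → ℕ) : Submodule ℝ (OSP n ℓ γ → ℝ) :=
  Submodule.span ℝ (Set.range (polytabloid (n := n) (ℓ := ℓ) (γ := γ)))

/-- The left regular representation of `S_n` on `ℝ^{S_n}`: `(ρ_L(τ) f)(σ) = f (τ⁻¹ σ)`. -/
def rhoL {n : ℕ} (τ : Equiv.Perm (Fin n)) (f : Equiv.Perm (Fin n) → ℝ) :
    Equiv.Perm (Fin n) → ℝ :=
  fun σ => f (τ⁻¹ * σ)

theorem Equiv.Perm.apply_inv_self {α : Type*} (f : Equiv.Perm α) (x : α) : f (f⁻¹ x) = x :=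
  f.apply_symm_apply x

section Aux

variable {n ℓ : ℕ} {γ : Fin ℓ → ℕ}

lemma osp_ext {μ ν : OSP n ℓ γ} (h : ∀ x, μ.1 x = ν.1 x) : μ = ν :=
  Subtype.ext (funext h)

@[simp] lemma ospAct_apply (σ : Equiv.Perm (Fin n)) (μ : OSP n ℓ γ) (x : Fin n) :
    (ospAct σ μ).1 x = μ.1 (σ⁻¹ x) := rfl

lemma ospAct_one (μ : OSP n ℓ γ) : ospAct 1 μ = μ := osp_ext fun _ => rfl

lemma ospAct_mul (σ τ : Equiv.Perm (Fin n)) (μ : OSP n ℓ γ) :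
    ospAct (σ * τ) μ = ospAct σ (ospAct τ μ) := by
  apply osp_ext; intro x; rfl

/-- The action as an equivalence of `OSP`. -/
def ospEquiv (σ : Equiv.Perm (Fin n)) : OSP n ℓ γ ≃ OSP n ℓ γ where
  toFun := ospAct σ
  invFun := ospAct σ⁻¹
  left_inv := fun μ => by rw [← ospAct_mul, inv_mul_cancel, ospAct_one]
  right_inv := fun μ => by rw [← ospAct_mul, mul_inv_cancel, ospAct_one]

lemma ospAct_eq_iff (σ : Equiv.Perm (Fin n)) (μ ν : OSP n ℓ γ) :
    ospAct σ μ = ν ↔ μ = ospAct σ⁻¹ ν := by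
  constructor
  · rintro rfl; rw [← ospAct_mul, inv_mul_cancel, ospAct_one]
  · rintro rfl; rw [← ospAct_mul, mul_inv_cancel, ospAct_one]

/-- L1 : the column index is smaller than the size of the block. -/
lemma colOf_lt (μ : OSP n ℓ γ) (x : Fin n) : colOf μ x < γ (μ.1 x) := by
  have hsub : (Finset.univ.filter fun y => μ.1 y = μ.1 x ∧ y < x)
      ⊆ (Finset.univ.filter fun y => μ.1 y = μ.1 x).erase x := by
    intro y hy
    simp only [Finset.mem_filter, Finset.mem_univ, true_and] at hy
    exact Finset.mem_erase.2 ⟨ne_of_lt hy.2, by simp [hy.1]⟩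
  have hx : x ∈ Finset.univ.filter fun y => μ.1 y = μ.1 x := by simp
  calc colOf μ x ≤ ((Finset.univ.filter fun y => μ.1 y = μ.1 x).erase x).card :=
        Finset.card_le_card hsub
    _ < (Finset.univ.filter fun y => μ.1 y = μ.1 x).card :=
        Finset.card_erase_lt_of_mem hx
    _ = γ (μ.1 x) := μ.2 _

/-- L2 : within a block, `colOf` is injective. -/
lemma colOf_injOn (μ : OSP n ℓ γ) {x y : Fin n} (hb : μ.1 x = μ.1 y)
    (hc : colOf μ x = colOf μ y) : x = y := by
  by_contra hne
  have key : ∀ a b : Fin n, μ.1 a = μ.1 b → a < b → colOf μ a < colOf μ b := by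
    intro a b hab hlt
    have hsub : insert a (Finset.univ.filter fun z => μ.1 z = μ.1 a ∧ z < a)
        ⊆ Finset.univ.filter fun z => μ.1 z = μ.1 b ∧ z < b := by
      intro z hz
      rcases Finset.mem_insert.1 hz with rfl | hz
      · simp [hab, hlt]
      · simp only [Finset.mem_filter, Finset.mem_univ, true_and] at hz ⊢
        exact ⟨hz.1.trans hab, hz.2.trans hlt⟩
    have hna : a ∉ (Finset.univ.filter fun z => μ.1 z = μ.1 a ∧ z < a) := by
      simp
    have := Finset.card_le_card hsub
    rw [Finset.card_insert_of_notMem hna] at this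
    exact Nat.lt_of_lt_of_le (Nat.lt_succ_self _) this
  rcases lt_or_gt_of_ne hne with h | h
  · exact absurd hc (Nat.ne_of_lt (key _ _ hb h))
  · exact absurd hc.symm (Nat.ne_of_lt (key _ _ hb.symm h))

/-- L3 : every column index `< γ j` is attained in block `j`. -/
lemma colOf_surj (μ : OSP n ℓ γ) (j : Fin ℓ) {c : ℕ} (hc : c < γ j) :
    ∃ x, μ.1 x = j ∧ colOf μ x = c := by
  classical
  set S := Finset.univ.filter fun x => μ.1 x = j with hS
  have hinj : Set.InjOn (colOf μ) S := by
    intro a ha b hb hab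
    simp only [hS, Finset.coe_filter, Set.mem_setOf_eq] at ha hb
    exact colOf_injOn μ (ha.2.trans hb.2.symm) hab
  have himsub : S.image (colOf μ) ⊆ Finset.range (γ j) := by
    intro c hc
    rcases Finset.mem_image.1 hc with ⟨x, hx, rfl⟩
    simp only [hS, Finset.mem_filter, Finset.mem_univ, true_and] at hx
    rw [Finset.mem_range, ← hx]
    exact colOf_lt μ x
  have hcard : (S.image (colOf μ)).card = (Finset.range (γ j)).card := by
    rw [Finset.card_image_of_injOn hinj, Finset.card_range]
    exact μ.2 j
  have him : S.image (colOf μ) = Finset.range (γ j) :=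
    Finset.eq_of_subset_of_card_le himsub (le_of_eq hcard.symm)
  have : c ∈ S.image (colOf μ) := by rw [him]; exact Finset.mem_range.2 hc
  rcases Finset.mem_image.1 this with ⟨x, hx, hcx⟩
  simp only [hS, Finset.mem_filter, Finset.mem_univ, true_and] at hx
  exact ⟨x, hx, hcx⟩

end Aux
section Counting

variable {n ℓ : ℕ} {γ : Fin ℓ → ℕ}

/-- Sub-lemma A: within a μ-block `j`, exactly `min (γ j) c` elements have column `< c`. -/
lemma card_block_col_lt (μ : OSP n ℓ γ) (j : Fin ℓ) (c : ℕ) :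
    (Finset.univ.filter fun x => μ.1 x = j ∧ colOf μ x < c).card = min (γ j) c := by
  classical
  set S := Finset.univ.filter fun x => μ.1 x = j ∧ colOf μ x < c with hS
  have hinj : Set.InjOn (colOf μ) S := by
    intro a ha b hb hab
    simp only [hS, Finset.coe_filter, Set.mem_setOf_eq] at ha hb
    exact colOf_injOn μ (ha.2.1.trans hb.2.1.symm) hab
  have him : S.image (colOf μ) = Finset.range (min (γ j) c) := by
    apply Finset.Subset.antisymm
    · intro d hd
      rcases Finset.mem_image.1 hd with ⟨x, hx, rfl⟩
      simp only [hS, Finset.mem_filter, Finset.mem_univ, true_and] at hx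
      rw [Finset.mem_range, lt_min_iff]
      exact ⟨hx.1 ▸ colOf_lt μ x, hx.2⟩
    · intro d hd
      rw [Finset.mem_range, lt_min_iff] at hd
      rcases colOf_surj μ j hd.1 with ⟨x, hx1, hx2⟩
      exact Finset.mem_image.2 ⟨x, by simp [hS, hx1, hx2, hd.2], hx2⟩
  have := Finset.card_image_of_injOn hinj
  rw [him, Finset.card_range] at this
  exact this.symm

/-- The counting lemma: if no two distinct elements of a common `ν`-block lie in a common
`μ`-column, then every element's `μ`-column index is less than its `ν`-block size. -/
lemma colOf_lt_of_noPair (μ ν : OSP n ℓ γ)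
    (H : ∀ x y, ν.1 x = ν.1 y → colOf μ x = colOf μ y → x = y) (x : Fin n) :
    colOf μ x < γ (ν.1 x) := by
  classical
  -- B : upper bound for ν-blocks
  have hB : ∀ (j : Fin ℓ) (c : ℕ),
      (Finset.univ.filter fun z => ν.1 z = j ∧ colOf μ z < c).card ≤ min (γ j) c := by
    intro j c
    apply le_min
    · refine le_trans (Finset.card_le_card ?_) (le_of_eq (ν.2 j))
      intro z hz
      simp only [Finset.mem_filter, Finset.mem_univ, true_and] at hz ⊢
      exact hz.1
    · have : ((Finset.univ.filter fun z => ν.1 z = j ∧ colOf μ z < c).image (colOf μ)).card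
          = (Finset.univ.filter fun z => ν.1 z = j ∧ colOf μ z < c).card := by
        apply Finset.card_image_of_injOn
        intro a ha b hb hab
        simp only [Finset.coe_filter, Set.mem_setOf_eq] at ha hb
        exact H a b (ha.2.1.trans hb.2.1.symm) hab
      rw [← this]
      refine le_trans (Finset.card_le_card ?_) (le_of_eq (Finset.card_range c))
      intro d hd
      rcases Finset.mem_image.1 hd with ⟨z, hz, rfl⟩
      simp only [Finset.mem_filter, Finset.mem_univ, true_and] at hz
      exact Finset.mem_range.2 hz.2
  -- C : total count equality
  have hC : ∀ c : ℕ, ∑ j : Fin ℓ,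
      (Finset.univ.filter fun z => ν.1 z = j ∧ colOf μ z < c).card
      = ∑ j : Fin ℓ, min (γ j) c := by
    intro c
    have hfib : ∀ (ρ : OSP n ℓ γ), ∑ j : Fin ℓ,
        (Finset.univ.filter fun z => ρ.1 z = j ∧ colOf μ z < c).card
        = (Finset.univ.filter fun z => colOf μ z < c).card := by
      intro ρ
      rw [Finset.card_eq_sum_card_fiberwise
        (f := fun z => ρ.1 z) (t := Finset.univ) (by intros; simp)]
      apply Finset.sum_congr rfl
      intro j _
      congr 1
      rw [Finset.filter_filter]
      apply Finset.filter_congr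
      intro z _
      exact and_comm
    rw [hfib ν]
    have := hfib μ
    rw [← this]
    apply Finset.sum_congr rfl
    intro j _
    exact card_block_col_lt μ j c
  -- pointwise equality
  have hEq : ∀ (j : Fin ℓ) (c : ℕ),
      (Finset.univ.filter fun z => ν.1 z = j ∧ colOf μ z < c).card = min (γ j) c := by
    intro j c
    by_contra hne
    have hlt : (Finset.univ.filter fun z => ν.1 z = j ∧ colOf μ z < c).card
        < min (γ j) c := lt_of_le_of_ne (hB j c) hne
    have : ∑ j : Fin ℓ, (Finset.univ.filter fun z => ν.1 z = j ∧ colOf μ z < c).card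
        < ∑ j : Fin ℓ, min (γ j) c :=
      Finset.sum_lt_sum (fun i _ => hB i c) ⟨j, Finset.mem_univ j, hlt⟩
    exact absurd (hC c) (Nat.ne_of_lt this)
  -- conclude
  set j := ν.1 x with hj
  have hcard : (Finset.univ.filter fun z => ν.1 z = j ∧ colOf μ z < γ j).card
      = (Finset.univ.filter fun z => ν.1 z = j).card := by
    rw [hEq j (γ j), min_self, ν.2 j]
  have hsub : (Finset.univ.filter fun z => ν.1 z = j ∧ colOf μ z < γ j)
      ⊆ Finset.univ.filter fun z => ν.1 z = j := by
    intro z hz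
    simp only [Finset.mem_filter, Finset.mem_univ, true_and] at hz ⊢
    exact hz.1
  have heq := Finset.eq_of_subset_of_card_le hsub (le_of_eq hcard.symm)
  have hx : x ∈ Finset.univ.filter fun z => ν.1 z = j := by simp [hj]
  rw [← heq] at hx
  simp only [Finset.mem_filter, Finset.mem_univ, true_and] at hx
  exact hx.2

end Counting
section Group

variable {n ℓ : ℕ} {γ : Fin ℓ → ℕ}

lemma mem_colGroup_iff {μ : OSP n ℓ γ} {β : Equiv.Perm (Fin n)} :
    β ∈ colGroup μ ↔ ∀ x, colOf μ (β x) = colOf μ x := by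
  simp [colGroup]

lemma one_mem_colGroup (μ : OSP n ℓ γ) : (1 : Equiv.Perm (Fin n)) ∈ colGroup μ :=
  mem_colGroup_iff.2 fun _ => rfl

lemma mul_mem_colGroup {μ : OSP n ℓ γ} {α β : Equiv.Perm (Fin n)}
    (hα : α ∈ colGroup μ) (hβ : β ∈ colGroup μ) : α * β ∈ colGroup μ := by
  rw [mem_colGroup_iff] at *
  intro x
  rw [Equiv.Perm.mul_apply, hα, hβ]

lemma inv_mem_colGroup {μ : OSP n ℓ γ} {β : Equiv.Perm (Fin n)}
    (hβ : β ∈ colGroup μ) : β⁻¹ ∈ colGroup μ := by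
  rw [mem_colGroup_iff] at *
  intro x
  conv_rhs => rw [← Equiv.Perm.apply_inv_self β x]
  rw [hβ]

/-- A column-preserving permutation fixing the tabloid is the identity. -/
lemma colGroup_stab {μ : OSP n ℓ γ} {β : Equiv.Perm (Fin n)}
    (hβ : β ∈ colGroup μ) (hfix : ∀ x, μ.1 (β x) = μ.1 x) : β = 1 := by
  ext x
  have := colOf_injOn μ (hfix x) (mem_colGroup_iff.1 hβ x)
  simp [this]

lemma polytabloid_self (μ : OSP n ℓ γ) : polytabloid μ μ = 1 := by
  classical
  unfold polytabloid
  rw [Finset.sum_eq_single 1]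
  · simp [inv_one, ospAct_one]
  · intro β hβ hne
    rw [if_neg]
    intro hcon
    apply hne
    have hfix : ∀ x, μ.1 (β x) = μ.1 x := by
      intro x
      have : (ospAct β⁻¹ μ).1 x = μ.1 x := by rw [hcon]
      rwa [ospAct_apply, inv_inv] at this
    exact colGroup_stab hβ hfix
  · intro h
    exact absurd (one_mem_colGroup μ) h

end Group

section Analysis

variable {n ℓ : ℕ} {γ : Fin ℓ → ℕ}

/-- Inner product on `ℝ^{Π_γ}`. -/
def ip (u w : OSP n ℓ γ → ℝ) : ℝ := ∑ ρ : OSP n ℓ γ, u ρ * w ρ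

/-- The permutation representation on `ℝ^{Π_γ}`. -/
def rho (θ : Equiv.Perm (Fin n)) (u : OSP n ℓ γ → ℝ) : OSP n ℓ γ → ℝ :=
  fun ν => u (ospAct θ⁻¹ ν)

/-- The standard basis vector. -/
def Eb (μ : OSP n ℓ γ) : OSP n ℓ γ → ℝ := fun ν => if ν = μ then 1 else 0

/-- The (signed) column-group symmetrizer. -/
def kap (μ : OSP n ℓ γ) (u : OSP n ℓ γ → ℝ) : OSP n ℓ γ → ℝ :=
  fun ν => ∑ β ∈ colGroup μ, ((Equiv.Perm.sign β : ℤ) : ℝ) * u (ospAct β ν)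

lemma rho_rho (θ θ' : Equiv.Perm (Fin n)) (u : OSP n ℓ γ → ℝ) :
    rho θ (rho θ' u) = rho (θ * θ') u := by
  funext ν
  simp [rho, ← ospAct_mul, mul_inv_rev]

lemma ip_comm (u w : OSP n ℓ γ → ℝ) : ip u w = ip w u := by
  unfold ip; exact Finset.sum_congr rfl fun ρ _ => mul_comm _ _

lemma ip_rho (θ : Equiv.Perm (Fin n)) (u w : OSP n ℓ γ → ℝ) :
    ip (rho θ u) (rho θ w) = ip u w := by
  unfold ip rho
  exact Fintype.sum_equiv (ospEquiv θ⁻¹) _ _ fun ρ => by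
    simp [ospEquiv]

lemma ip_Eb (u : OSP n ℓ γ → ℝ) (μ : OSP n ℓ γ) : ip u (Eb μ) = u μ := by
  unfold ip Eb
  rw [Finset.sum_eq_single μ] <;> simp +contextual

lemma kap_Eb_self (μ : OSP n ℓ γ) : kap μ (Eb μ) = polytabloid μ := by
  funext ρ
  unfold kap Eb polytabloid
  apply Finset.sum_congr rfl
  intro β _
  rw [mul_ite, mul_one, mul_zero]
  apply if_congr _ rfl rfl
  rw [ospAct_eq_iff]
  exact eq_comm

end Analysis
section KeyLemma

variable {n ℓ : ℕ} {γ : Fin ℓ → ℕ}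

lemma kap_Eb_case_zero (μ ν : OSP n ℓ γ) {x y : Fin n} (hne : x ≠ y)
    (hblock : ν.1 x = ν.1 y) (hcol : colOf μ x = colOf μ y) :
    kap μ (Eb ν) = fun _ => 0 := by
  classical
  funext ρ
  unfold kap Eb
  set t := Equiv.swap x y with ht
  have htmem : t ∈ colGroup μ := by
    rw [mem_colGroup_iff]
    intro z
    rcases eq_or_ne z x with rfl | hzx
    · rw [ht, Equiv.swap_apply_left, hcol]
    rcases eq_or_ne z y with rfl | hzy
    · rw [ht, Equiv.swap_apply_right, hcol]
    · rw [ht, Equiv.swap_apply_of_ne_of_ne hzx hzy]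
  have htν : ospAct t ν = ν := by
    apply osp_ext
    intro z
    rw [ospAct_apply, ht, Equiv.swap_inv]
    rcases eq_or_ne z x with rfl | hzx
    · rw [Equiv.swap_apply_left, hblock]
    rcases eq_or_ne z y with rfl | hzy
    · rw [Equiv.swap_apply_right, hblock]
    · rw [Equiv.swap_apply_of_ne_of_ne hzx hzy]
  have hcond : ∀ β : Equiv.Perm (Fin n), (ospAct (t * β) ρ = ν ↔ ospAct β ρ = ν) := by
    intro β
    rw [ospAct_mul, ospAct_eq_iff]
    conv_rhs => rw [show ν = ospAct t⁻¹ ν by rw [ht, Equiv.swap_inv, ← ht, htν]]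
  apply Finset.sum_involution (g := fun β _ => t * β)
  · intro β hβ
    have hsign : ((Equiv.Perm.sign (t * β) : ℤ) : ℝ) = -((Equiv.Perm.sign β : ℤ) : ℝ) := by
      rw [map_mul, ht, Equiv.Perm.sign_swap hne]
      push_cast
      ring
    rw [hsign]
    by_cases hc : ospAct β ρ = ν
    · rw [if_pos hc, if_pos ((hcond β).2 hc)]; ring
    · rw [if_neg hc, if_neg (fun h => hc ((hcond β).1 h))]; ring
  · intro β hβ _
    intro hcon
    have h1 : t = 1 := mul_right_cancel (b := β) (by rw [hcon, one_mul])
    rw [ht] at h1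
    have h2 := congrArg (fun e : Equiv.Perm (Fin n) => e x) h1
    simp only [Equiv.swap_apply_left, Equiv.Perm.one_apply] at h2
    exact hne h2.symm
  · intro β hβ
    exact mul_mem_colGroup htmem hβ
  · intro β hβ
    rw [← mul_assoc, ht, Equiv.swap_mul_self, one_mul]

lemma kap_Eb_case_perm (μ ν : OSP n ℓ γ)
    (H : ∀ x y, ν.1 x = ν.1 y → colOf μ x = colOf μ y → x = y) :
    ∃ β₀ ∈ colGroup μ, ν = ospAct β₀⁻¹ μ := by
  classical
  have hcol := colOf_lt_of_noPair μ ν H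
  have hex : ∀ x : Fin n, ∃ y, μ.1 y = ν.1 x ∧ colOf μ y = colOf μ x := by
    intro x
    exact colOf_surj μ (ν.1 x) (hcol x)
  choose f hf1 hf2 using hex
  have hinj : Function.Injective f := by
    intro a b hab
    apply H a b
    · rw [← hf1 a, ← hf1 b, hab]
    · rw [← hf2 a, ← hf2 b, hab]
  let β₀ : Equiv.Perm (Fin n) := Equiv.ofBijective f (Finite.injective_iff_bijective.1 hinj)
  have hβ₀ : ∀ x, β₀ x = f x := fun x => rfl
  refine ⟨β₀, ?_, ?_⟩
  · rw [mem_colGroup_iff]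
    intro x
    rw [hβ₀, hf2]
  · apply osp_ext
    intro x
    rw [ospAct_apply, inv_inv]
    rw [hβ₀, hf1]

lemma kap_Eb_smul (μ ν : OSP n ℓ γ) :
    ∃ c : ℝ, kap μ (Eb ν) = fun ρ => c * polytabloid μ ρ := by
  classical
  by_cases hpair : ∃ x y, x ≠ y ∧ ν.1 x = ν.1 y ∧ colOf μ x = colOf μ y
  · rcases hpair with ⟨x, y, hne, hb, hc⟩
    exact ⟨0, by rw [kap_Eb_case_zero μ ν hne hb hc]; funext ρ; rw [zero_mul]⟩
  · push_neg at hpair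
    have H : ∀ x y, ν.1 x = ν.1 y → colOf μ x = colOf μ y → x = y := by
      intro x y hb hc
      by_contra hne
      exact (hpair x y hne hb) hc
    rcases kap_Eb_case_perm μ ν H with ⟨β₀, hβ₀, hν⟩
    refine ⟨((Equiv.Perm.sign β₀ : ℤ) : ℝ), ?_⟩
    funext ρ
    unfold kap Eb polytabloid
    rw [Finset.mul_sum]
    apply Finset.sum_nbij' (i := fun β => β₀ * β) (j := fun β => β₀⁻¹ * β)
    · intro β hβ; exact mul_mem_colGroup hβ₀ hβ
    · intro β hβ; exact mul_mem_colGroup (inv_mem_colGroup hβ₀) hβ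
    · intro β _; rw [← mul_assoc, inv_mul_cancel, one_mul]
    · intro β _; rw [← mul_assoc, mul_inv_cancel, one_mul]
    · intro β hβ
      have hcond : (ospAct β ρ = ν) ↔ (ospAct (β₀ * β)⁻¹ μ = ρ) := by
      -- ospAct β ρ = ν ↔ ρ = ospAct β⁻¹ ν = ospAct β⁻¹ (ospAct β₀⁻¹ μ) = ospAct (β₀β)⁻¹ μ
        rw [ospAct_eq_iff β, hν, ← ospAct_mul, ← mul_inv_rev]
        exact eq_comm
      have hsign : ((Equiv.Perm.sign (β₀ * β) : ℤ) : ℝ)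
          = ((Equiv.Perm.sign β₀ : ℤ) : ℝ) * ((Equiv.Perm.sign β : ℤ) : ℝ) := by
        rw [map_mul]; push_cast; ring
      rw [mul_ite, mul_one, mul_zero, mul_ite, mul_zero]
      by_cases hc : ospAct β ρ = ν
      · rw [if_pos hc, if_pos (hcond.1 hc), hsign, ← mul_assoc]
        rcases Int.units_eq_one_or (Equiv.Perm.sign β₀) with h | h <;> rw [h] <;> push_cast <;> ring
      · rw [if_neg hc, if_neg (fun h => hc (hcond.2 h))]

/-- Key Lemma: the column symmetrizer sends everything to a multiple of the polytabloid. -/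
lemma kap_smul (μ : OSP n ℓ γ) (u : OSP n ℓ γ → ℝ) :
    ∃ c : ℝ, kap μ u = fun ρ => c * polytabloid μ ρ := by
  classical
  have hc : ∀ ν : OSP n ℓ γ, ∃ c : ℝ, kap μ (Eb ν) = fun ρ => c * polytabloid μ ρ :=
    fun ν => kap_Eb_smul μ ν
  choose cf hcf using hc
  refine ⟨∑ ν : OSP n ℓ γ, u ν * cf ν, ?_⟩
  funext ρ
  have hexp : ∀ X : OSP n ℓ γ, u X = ∑ ν : OSP n ℓ γ, u ν * Eb ν X := by
    intro X
    unfold Eb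
    rw [Finset.sum_eq_single X] <;> simp +contextual [eq_comm]
  unfold kap
  calc ∑ β ∈ colGroup μ, ((Equiv.Perm.sign β : ℤ) : ℝ) * u (ospAct β ρ)
      = ∑ β ∈ colGroup μ, ∑ ν : OSP n ℓ γ,
          u ν * (((Equiv.Perm.sign β : ℤ) : ℝ) * Eb ν (ospAct β ρ)) := by
        apply Finset.sum_congr rfl
        intro β _
        rw [hexp (ospAct β ρ), Finset.mul_sum]
        apply Finset.sum_congr rfl
        intro ν _
        ring
    _ = ∑ ν : OSP n ℓ γ, u ν * kap μ (Eb ν) ρ := by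
        rw [Finset.sum_comm]
        apply Finset.sum_congr rfl
        intro ν _
        unfold kap
        rw [Finset.mul_sum]
    _ = (∑ ν : OSP n ℓ γ, u ν * cf ν) * polytabloid μ ρ := by
        rw [Finset.sum_mul]
        apply Finset.sum_congr rfl
        intro ν _
        rw [hcf ν]
        ring

end KeyLemma
section Transport

variable {n ℓ : ℕ} {γ : Fin ℓ → ℕ}

/-- Any two ordered set partitions of the same shape are related by a
block- and column- compatible permutation. -/
lemma transport (μ ν : OSP n ℓ γ) :
    ∃ θ : Equiv.Perm (Fin n), (∀ x, ν.1 (θ x) = μ.1 x) ∧ (∀ x, colOf ν (θ x) = colOf μ x) := by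
  classical
  have hex : ∀ x : Fin n, ∃ y, ν.1 y = μ.1 x ∧ colOf ν y = colOf μ x := by
    intro x
    exact colOf_surj ν (μ.1 x) (colOf_lt μ x)
  choose f hf1 hf2 using hex
  have hinj : Function.Injective f := by
    intro a b hab
    apply colOf_injOn μ
    · rw [← hf1 a, ← hf1 b, hab]
    · rw [← hf2 a, ← hf2 b, hab]
  refine ⟨Equiv.ofBijective f (Finite.injective_iff_bijective.1 hinj), ?_, ?_⟩
  · intro x; exact hf1 x
  · intro x; exact hf2 x

lemma rho_polytabloid {θ : Equiv.Perm (Fin n)} {μ ν : OSP n ℓ γ}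
    (hb : ∀ x, ν.1 (θ x) = μ.1 x) (hc : ∀ x, colOf ν (θ x) = colOf μ x) :
    rho θ (polytabloid μ) = polytabloid ν := by
  classical
  have hν : ospAct θ μ = ν := by
    apply osp_ext
    intro x
    rw [ospAct_apply]
    conv_rhs => rw [show x = θ (θ⁻¹ x) by rw [Equiv.Perm.apply_inv_self]]
    exact (hb (θ⁻¹ x)).symm
  have hμ : ospAct θ⁻¹ ν = μ := by
    rw [← hν, ← ospAct_mul, inv_mul_cancel, ospAct_one]
  funext ρ
  show polytabloid μ (ospAct θ⁻¹ ρ) = polytabloid ν ρ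
  unfold polytabloid
  apply Finset.sum_nbij' (i := fun β => θ * β * θ⁻¹) (j := fun β => θ⁻¹ * β * θ)
  · intro β hβ
    rw [mem_colGroup_iff] at *
    intro z
    have h1 : colOf ν (θ (β (θ⁻¹ z))) = colOf μ (β (θ⁻¹ z)) := hc _
    have h2 : colOf ν (θ (θ⁻¹ z)) = colOf μ (θ⁻¹ z) := hc _
    rw [Equiv.Perm.apply_inv_self] at h2
    show colOf ν ((θ * β * θ⁻¹) z) = colOf ν z
    have : (θ * β * θ⁻¹) z = θ (β (θ⁻¹ z)) := rfl
    rw [this, h1, hβ, ← h2]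
  · intro β hβ
    rw [mem_colGroup_iff] at *
    intro z
    show colOf μ ((θ⁻¹ * β * θ) z) = colOf μ z
    have h1 : (θ⁻¹ * β * θ) z = θ⁻¹ (β (θ z)) := rfl
    have h2 : colOf ν (θ (θ⁻¹ (β (θ z)))) = colOf μ (θ⁻¹ (β (θ z))) := hc _
    rw [Equiv.Perm.apply_inv_self] at h2
    rw [h1, ← h2, hβ, hc]
  · intro β _
    group
  · intro β _
    group
  · intro β hβ
    have hcond : (ospAct β⁻¹ μ = ospAct θ⁻¹ ρ) ↔ (ospAct (θ * β * θ⁻¹)⁻¹ ν = ρ) := by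
    -- (θβθ⁻¹)⁻¹ ν = θ β⁻¹ θ⁻¹ ν = θ (β⁻¹ μ)
      have h1 : ospAct (θ * β * θ⁻¹)⁻¹ ν = ospAct θ (ospAct β⁻¹ μ) := by
        rw [show (θ * β * θ⁻¹)⁻¹ = θ * β⁻¹ * θ⁻¹ by group, ospAct_mul, ospAct_mul, hμ]
      rw [h1, ospAct_eq_iff θ]
    have hsign : Equiv.Perm.sign (θ * β * θ⁻¹) = Equiv.Perm.sign β := by
      rw [map_mul, map_mul, Equiv.Perm.sign_inv]
      rcases Int.units_eq_one_or (Equiv.Perm.sign θ) with h | h <;>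
        rcases Int.units_eq_one_or (Equiv.Perm.sign β) with h' | h' <;> rw [h, h'] <;> rfl
    rw [hsign]
    exact if_congr hcond rfl rfl

end Transport
section Operator

variable {n ℓ : ℕ} {γ : Fin ℓ → ℕ}

/-- The averaged rank-one operator `u ↦ ∑_α ⟨ρ_α a, u⟩ ρ_α b`. -/
def opT (a b : OSP n ℓ γ → ℝ) (u : OSP n ℓ γ → ℝ) : OSP n ℓ γ → ℝ :=
  fun ν => ∑ α : Equiv.Perm (Fin n), ip (rho α a) u * rho α b ν

lemma opT_rho (a b u : OSP n ℓ γ → ℝ) (θ : Equiv.Perm (Fin n)) :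
    opT a b (rho θ u) = rho θ (opT a b u) := by
  funext ν
  show _ = opT a b u (ospAct θ⁻¹ ν)
  unfold opT
  refine (Fintype.sum_equiv (Equiv.mulLeft θ) _ _ fun α => ?_).symm
  have h1 : rho (θ * α) a = rho θ (rho α a) := (rho_rho θ α a).symm
  have h2 : ip (rho (θ * α) a) (rho θ u) = ip (rho α a) u := by
    rw [h1, ip_rho]
  have h3 : rho (θ * α) b ν = rho α b (ospAct θ⁻¹ ν) := by
    unfold rho
    rw [mul_inv_rev, ospAct_mul]
  show ip (rho α a) u * rho α b (ospAct θ⁻¹ ν) = ip (rho (θ * α) a) (rho θ u) * rho (θ * α) b ν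
  rw [h2, h3]

lemma ip_sum_right {ι : Type*} (s : Finset ι) (a : OSP n ℓ γ → ℝ)
    (c : ι → ℝ) (h : ι → OSP n ℓ γ → ℝ) :
    ip a (fun ν => ∑ i ∈ s, c i * h i ν) = ∑ i ∈ s, c i * ip a (h i) := by
  unfold ip
  have hbeta : ∀ ρ, a ρ * (fun ν => ∑ i ∈ s, c i * h i ν) ρ = ∑ i ∈ s, c i * (a ρ * h i ρ) := by
    intro ρ
    show a ρ * (∑ i ∈ s, c i * h i ρ) = _
    rw [Finset.mul_sum]
    apply Finset.sum_congr rfl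
    intro i _
    ring
  rw [Finset.sum_congr rfl fun ρ _ => hbeta ρ, Finset.sum_comm]
  apply Finset.sum_congr rfl
  intro i _
  rw [Finset.mul_sum]

lemma opT_lin {ι : Type*} (s : Finset ι) (a b : OSP n ℓ γ → ℝ)
    (c : ι → ℝ) (h : ι → OSP n ℓ γ → ℝ) :
    opT a b (fun ν => ∑ i ∈ s, c i * h i ν) = fun ν => ∑ i ∈ s, c i * opT a b (h i) ν := by
  funext ν
  unfold opT
  calc ∑ α : Equiv.Perm (Fin n), ip (rho α a) (fun ν => ∑ i ∈ s, c i * h i ν) * rho α b ν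
      = ∑ α : Equiv.Perm (Fin n), ∑ i ∈ s, c i * (ip (rho α a) (h i) * rho α b ν) := by
        apply Finset.sum_congr rfl
        intro α _
        rw [ip_sum_right, Finset.sum_mul]
        apply Finset.sum_congr rfl
        intro i _
        ring
    _ = ∑ i ∈ s, c i * ∑ α : Equiv.Perm (Fin n), ip (rho α a) (h i) * rho α b ν := by
        rw [Finset.sum_comm]
        apply Finset.sum_congr rfl
        intro i _
        rw [Finset.mul_sum]

lemma opT_kap (a b u : OSP n ℓ γ → ℝ) (μ : OSP n ℓ γ) :
    opT a b (kap μ u) = kap μ (opT a b u) := by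
  have hk : ∀ w : OSP n ℓ γ → ℝ, kap μ w
      = fun ν => ∑ β ∈ colGroup μ, ((Equiv.Perm.sign β : ℤ) : ℝ) * rho β⁻¹ w ν := by
    intro w
    funext ν
    unfold kap rho
    apply Finset.sum_congr rfl
    intro β _
    rw [inv_inv]
  rw [hk u, opT_lin, hk (opT a b u)]
  funext ν
  apply Finset.sum_congr rfl
  intro β _
  rw [opT_rho]

lemma opT_polytabloid (a b : OSP n ℓ γ → ℝ) (μ : OSP n ℓ γ) :
    ∃ c : ℝ, opT a b (polytabloid μ) = fun ρ => c * polytabloid μ ρ := by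
  obtain ⟨c, hc⟩ := kap_smul μ (opT a b (Eb μ))
  refine ⟨c, ?_⟩
  have h1 : opT a b (polytabloid μ) = kap μ (opT a b (Eb μ)) := by
    rw [← kap_Eb_self, opT_kap]
  rw [h1, hc]

lemma opT_const (a b : OSP n ℓ γ → ℝ) (π : OSP n ℓ γ) :
    ∃ c : ℝ, ∀ μ : OSP n ℓ γ, opT a b (polytabloid μ) = fun ρ => c * polytabloid μ ρ := by
  obtain ⟨c, hc⟩ := opT_polytabloid a b π
  refine ⟨c, fun μ => ?_⟩
  obtain ⟨θ, hb, hcol⟩ := transport π μ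
  have hq : rho θ (polytabloid π) = polytabloid μ := rho_polytabloid hb hcol
  rw [← hq, opT_rho, hc]
  funext ν
  show (fun ρ => c * polytabloid π ρ) (ospAct θ⁻¹ ν) = _
  show c * polytabloid π (ospAct θ⁻¹ ν) = c * rho θ (polytabloid π) ν
  rfl

lemma opT_add (a b u w : OSP n ℓ γ → ℝ) :
    opT a b (u + w) = opT a b u + opT a b w := by
  funext ν
  show opT a b (u + w) ν = opT a b u ν + opT a b w ν
  unfold opT
  rw [← Finset.sum_add_distrib]
  apply Finset.sum_congr rfl
  intro α _
  have : ip (rho α a) (u + w) = ip (rho α a) u + ip (rho α a) w := by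
    unfold ip
    rw [← Finset.sum_add_distrib]
    apply Finset.sum_congr rfl
    intro ρ _
    show rho α a ρ * (u ρ + w ρ) = _
    ring
  rw [this]
  ring

lemma opT_smul (a b u : OSP n ℓ γ → ℝ) (r : ℝ) :
    opT a b (r • u) = r • opT a b u := by
  funext ν
  show opT a b (r • u) ν = r * opT a b u ν
  unfold opT
  rw [Finset.mul_sum]
  apply Finset.sum_congr rfl
  intro α _
  have : ip (rho α a) (r • u) = r * ip (rho α a) u := by
    unfold ip
    rw [Finset.mul_sum]
    apply Finset.sum_congr rfl
    intro ρ _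
    show rho α a ρ * (r * u ρ) = _
    ring
  rw [this]
  ring

lemma opT_zero (a b : OSP n ℓ γ → ℝ) : opT a b (0 : OSP n ℓ γ → ℝ) = 0 := by
  funext ν
  show opT a b 0 ν = 0
  unfold opT
  apply Finset.sum_eq_zero
  intro α _
  have : ip (rho α a) (0 : OSP n ℓ γ → ℝ) = 0 := by
    unfold ip
    apply Finset.sum_eq_zero
    intro ρ _
    show rho α a ρ * 0 = 0
    ring
  rw [this, zero_mul]

lemma opT_specht (a b : OSP n ℓ γ → ℝ) (π : OSP n ℓ γ) :
    ∃ c : ℝ, ∀ w ∈ Specht n ℓ γ, opT a b w = fun ρ => c * w ρ := by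
  obtain ⟨c, hc⟩ := opT_const a b π
  refine ⟨c, fun w hw => ?_⟩
  induction hw using Submodule.span_induction with
  | mem x hx =>
      rcases hx with ⟨μ, rfl⟩
      exact hc μ
  | zero =>
      rw [opT_zero]
      funext ν
      simp
  | add x y hx hy ihx ihy =>
      rw [opT_add, ihx, ihy]
      funext ν
      show (fun ρ => c * x ρ) ν + (fun ρ => c * y ρ) ν = c * (x ν + y ν)
      ring
  | smul r x hx ihx =>
      rw [opT_smul, ihx]
      funext ν
      show r * (c * x ν) = c * (r * x ν)
      ring

end Operator
section Main

variable {n ℓ : ℕ} {γ : Fin ℓ → ℕ}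

lemma ip_opT (a b u w : OSP n ℓ γ → ℝ) :
    ip (opT a b u) w = ip u (opT b a w) := by
  have h1 : ip (opT a b u) w
      = ∑ α : Equiv.Perm (Fin n), ip (rho α a) u * ip (rho α b) w := by
    have e1 : ∀ ρ : OSP n ℓ γ, opT a b u ρ * w ρ
        = ∑ α : Equiv.Perm (Fin n), ip (rho α a) u * (rho α b ρ * w ρ) := by
      intro ρ
      show (∑ α : Equiv.Perm (Fin n), ip (rho α a) u * rho α b ρ) * w ρ = _
      rw [Finset.sum_mul]
      exact Finset.sum_congr rfl fun α _ => by ring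
    show ∑ ρ : OSP n ℓ γ, opT a b u ρ * w ρ = _
    rw [Finset.sum_congr rfl fun ρ _ => e1 ρ, Finset.sum_comm]
    apply Finset.sum_congr rfl
    intro α _
    rw [← Finset.mul_sum]
    rfl
  have h2 : ip u (opT b a w)
      = ∑ α : Equiv.Perm (Fin n), ip (rho α b) w * ip (rho α a) u := by
    have e2 : ∀ ρ : OSP n ℓ γ, u ρ * opT b a w ρ
        = ∑ α : Equiv.Perm (Fin n), ip (rho α b) w * (rho α a ρ * u ρ) := by
      intro ρ
      show u ρ * (∑ α : Equiv.Perm (Fin n), ip (rho α b) w * rho α a ρ) = _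
      rw [Finset.mul_sum]
      exact Finset.sum_congr rfl fun α _ => by ring
    show ∑ ρ : OSP n ℓ γ, u ρ * opT b a w ρ = _
    rw [Finset.sum_congr rfl fun ρ _ => e2 ρ, Finset.sum_comm]
    apply Finset.sum_congr rfl
    intro α _
    rw [← Finset.mul_sum]
    rfl
  rw [h1, h2]
  apply Finset.sum_congr rfl
  intro α _
  ring

lemma trace_zero (v v' : OSP n ℓ γ → ℝ) (horth : ∑ μ : OSP n ℓ γ, v μ * v' μ = 0) :
    ∑ μ : OSP n ℓ γ, opT v' v (Eb μ) μ = 0 := by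
  have h1 : ∀ μ : OSP n ℓ γ, opT v' v (Eb μ) μ
      = ∑ α : Equiv.Perm (Fin n), rho α v' μ * rho α v μ := by
    intro μ
    unfold opT
    apply Finset.sum_congr rfl
    intro α _
    rw [ip_Eb]
  rw [Finset.sum_congr rfl fun μ _ => h1 μ, Finset.sum_comm]
  apply Finset.sum_eq_zero
  intro α _
  have : ∑ μ : OSP n ℓ γ, rho α v' μ * rho α v μ = ip (rho α v') (rho α v) := rfl
  rw [this, ip_rho]
  rw [ip_comm]
  exact horth

lemma opT_Eb_zero (v v' : OSP n ℓ γ → ℝ) (hv : v ∈ Specht n ℓ γ) (π : OSP n ℓ γ)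
    (horth : ∑ μ : OSP n ℓ γ, v μ * v' μ = 0) (μ : OSP n ℓ γ) (ρ : OSP n ℓ γ) :
    opT v' v (Eb μ) ρ = 0 := by
  classical
  obtain ⟨c, hc⟩ := opT_specht v v' π
  have hTv : opT v v' v = fun ρ => c * v ρ := hc v hv
  have hTT : ∀ ν : OSP n ℓ γ, opT v v' (opT v' v (Eb ν))
      = fun x => c * opT v' v (Eb ν) x := by
    intro ν
    have hrep : opT v' v (Eb ν)
        = fun x => ∑ α : Equiv.Perm (Fin n), ip (rho α v') (Eb ν) * rho α v x := rfl
    rw [hrep, opT_lin]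
    funext x
    have hterm : ∀ α : Equiv.Perm (Fin n),
        ip (rho α v') (Eb ν) * opT v v' (rho α v) x
        = c * (ip (rho α v') (Eb ν) * rho α v x) := by
      intro α
      rw [opT_rho, hTv]
      show ip (rho α v') (Eb ν) * (fun ρ => c * v ρ) (ospAct α⁻¹ x) = _
      show ip (rho α v') (Eb ν) * (c * v (ospAct α⁻¹ x)) = _
      have : rho α v x = v (ospAct α⁻¹ x) := rfl
      rw [this]
      ring
    rw [Finset.sum_congr rfl fun α _ => hterm α, ← Finset.mul_sum]
  have hQ : ∑ ν : OSP n ℓ γ, ip (opT v' v (Eb ν)) (opT v' v (Eb ν)) = 0 := by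
    have hstep : ∀ ν : OSP n ℓ γ, ip (opT v' v (Eb ν)) (opT v' v (Eb ν))
        = c * opT v' v (Eb ν) ν := by
      intro ν
      rw [ip_opT, hTT ν]
      rw [ip_comm, ip_Eb]
    rw [Finset.sum_congr rfl fun ν _ => hstep ν, ← Finset.mul_sum,
      trace_zero v v' horth, mul_zero]
  have hnonneg : ∀ ν ∈ (Finset.univ : Finset (OSP n ℓ γ)),
      0 ≤ ip (opT v' v (Eb ν)) (opT v' v (Eb ν)) := by
    intro ν _
    unfold ip
    apply Finset.sum_nonneg
    intro ρ _
    exact mul_self_nonneg _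
  have hzero := (Finset.sum_eq_zero_iff_of_nonneg hnonneg).1 hQ μ (Finset.mem_univ μ)
  unfold ip at hzero
  have hzq : ∀ x ∈ (Finset.univ : Finset (OSP n ℓ γ)),
      (0:ℝ) ≤ opT v' v (Eb μ) x * opT v' v (Eb μ) x :=
    fun x _ => mul_self_nonneg _
  have := (Finset.sum_eq_zero_iff_of_nonneg hzq).1 hzero ρ (Finset.mem_univ ρ)
  exact (mul_self_eq_zero).1 this

/-- The heart of the theorem. -/
lemma pair_vanish (v v' : OSP n ℓ γ → ℝ) (hv : v ∈ Specht n ℓ γ) (π : OSP n ℓ γ)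
    (horth : ∑ μ : OSP n ℓ γ, v μ * v' μ = 0) (μ0 μ0' : OSP n ℓ γ) :
    ∑ α : Equiv.Perm (Fin n), v (ospAct α μ0) * v' (ospAct α μ0') = 0 := by
  have h0 := opT_Eb_zero v v' hv π horth μ0' μ0
  have h1 : opT v' v (Eb μ0') μ0
      = ∑ α : Equiv.Perm (Fin n), v' (ospAct α⁻¹ μ0') * v (ospAct α⁻¹ μ0) := by
    unfold opT
    apply Finset.sum_congr rfl
    intro α _
    rw [ip_Eb]
    rfl
  have h2 : ∑ α : Equiv.Perm (Fin n), v (ospAct α μ0) * v' (ospAct α μ0')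
      = ∑ α : Equiv.Perm (Fin n), v' (ospAct α⁻¹ μ0') * v (ospAct α⁻¹ μ0) := by
    apply Fintype.sum_equiv (Equiv.inv (Equiv.Perm (Fin n)))
    intro α
    show v (ospAct α μ0) * v' (ospAct α μ0') = v' (ospAct α⁻¹⁻¹ μ0') * v (ospAct α⁻¹⁻¹ μ0)
    rw [inv_inv]
    ring
  rw [h2, ← h1, h0]

end Main
/-- if `v, v'` are orthogonal vectors of the Specht submodule
`V_γ* ⊆ ℝ^{Π_γ}` (for a partition `γ` of `n`), then the left `S_n`-submodules of
`ℝ^{S_n}` generated by `B_π v` and by `B_π v'` are orthogonal subspaces. -/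
theorem orthogonal_generated_modules {n ℓ : ℕ} (hn : 1 ≤ n) (γ : Fin ℓ → ℕ)
    (hpart : Antitone γ) (hsum : ∑ j, γ j = n) (π : OSP n ℓ γ)
    (v v' : OSP n ℓ γ → ℝ) (hv : v ∈ Specht n ℓ γ) (hv' : v' ∈ Specht n ℓ γ)
    (horth : ∑ μ : OSP n ℓ γ, v μ * v' μ = 0) :
    ∀ f ∈ Submodule.span ℝ {f | ∃ σ : Equiv.Perm (Fin n), f = rhoL σ (liftB π v)},
    ∀ g ∈ Submodule.span ℝ {g | ∃ σ : Equiv.Perm (Fin n), g = rhoL σ (liftB π v')},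
      ∑ τ : Equiv.Perm (Fin n), f τ * g τ = 0 := by
  classical
  -- the key generator-level computation
  have hcore : ∀ σ σ' : Equiv.Perm (Fin n),
      ∑ τ : Equiv.Perm (Fin n), rhoL σ (liftB π v) τ * rhoL σ' (liftB π v') τ = 0 := by
    intro σ σ'
    have hmain := pair_vanish v v' hv π horth (ospAct σ π) (ospAct σ' π)
    have hre : ∑ τ : Equiv.Perm (Fin n), rhoL σ (liftB π v) τ * rhoL σ' (liftB π v') τ
        = ∑ α : Equiv.Perm (Fin n),
            v (ospAct α (ospAct σ π)) * v' (ospAct α (ospAct σ' π)) := by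
      refine (Fintype.sum_equiv (Equiv.inv (Equiv.Perm (Fin n))) _ _ fun τ => ?_).symm
      show v (ospAct τ (ospAct σ π)) * v' (ospAct τ (ospAct σ' π))
          = rhoL σ (liftB π v) τ⁻¹ * rhoL σ' (liftB π v') τ⁻¹
      unfold rhoL liftB
      rw [← ospAct_mul, ← ospAct_mul, ← mul_inv_rev, ← mul_inv_rev, inv_inv, inv_inv]
    rw [hre, hmain]
  intro f hf
  induction hf using Submodule.span_induction with
  | mem f0 hf0 =>
      rcases hf0 with ⟨σ, rfl⟩
      intro g hg
      induction hg using Submodule.span_induction with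
      | mem g0 hg0 =>
          rcases hg0 with ⟨σ', rfl⟩
          exact hcore σ σ'
      | zero => simp
      | add x y hx hy ihx ihy =>
          have : ∑ τ : Equiv.Perm (Fin n), rhoL σ (liftB π v) τ * (x + y) τ
              = (∑ τ : Equiv.Perm (Fin n), rhoL σ (liftB π v) τ * x τ)
                + ∑ τ : Equiv.Perm (Fin n), rhoL σ (liftB π v) τ * y τ := by
            rw [← Finset.sum_add_distrib]
            exact Finset.sum_congr rfl fun τ _ => by
              show _ * (x τ + y τ) = _
              ring
          rw [this, ihx, ihy, add_zero]
      | smul r x hx ihx =>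
          have : ∑ τ : Equiv.Perm (Fin n), rhoL σ (liftB π v) τ * (r • x) τ
              = r * ∑ τ : Equiv.Perm (Fin n), rhoL σ (liftB π v) τ * x τ := by
            rw [Finset.mul_sum]
            exact Finset.sum_congr rfl fun τ _ => by
              show _ * (r * x τ) = _
              ring
          rw [this, ihx, mul_zero]
  | zero =>
      intro g hg
      simp
  | add x y hx hy ihx ihy =>
      intro g hg
      have : ∑ τ : Equiv.Perm (Fin n), (x + y) τ * g τ
          = (∑ τ : Equiv.Perm (Fin n), x τ * g τ) + ∑ τ : Equiv.Perm (Fin n), y τ * g τ := by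
        rw [← Finset.sum_add_distrib]
        exact Finset.sum_congr rfl fun τ _ => by
          show (x τ + y τ) * _ = _
          ring
      rw [this, ihx g hg, ihy g hg, add_zero]
  | smul r x hx ihx =>
      intro g hg
      have : ∑ τ : Equiv.Perm (Fin n), (r • x) τ * g τ
          = r * ∑ τ : Equiv.Perm (Fin n), x τ * g τ := by
        rw [Finset.mul_sum]
        exact Finset.sum_congr rfl fun τ _ => by
          show (r * x τ) * _ = _
          ring
      rw [this, ihx g hg, mul_zero]
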